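/- Let T be a finite tree with vertices colored black or white, containing at least one connected subgraph of size i, for some 1 ≤ i ≤ n. Then the set {j : (i,j) appears in T} is exactly the integer interval [i_min, i_max], where i_min and i_max are the minimum and maximum number of black vertices over all connected subgraphs of T with exactly i vertices. -/

import Mathlib

open SimpleGraph Finset

set_option linter.unusedSectionVars false
set_option linter.unusedVariables false
set_option maxHeartbeats 1600000

namespace AppearsIcc

variable {V : Type*} [Fintype V] [DecidableEq V] {G : SimpleGraph V}


lemma conn_iff_walks (s : Finset V) :
    (G.induce (↑s : Set V)).Connected ↔
      s.Nonempty ∧ ∀ x ∈ s, ∀ y ∈ s, ∃ p : G.Walk x y, ∀ z ∈ p.support, z ∈ s := by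
  rw [SimpleGraph.connected_induce_iff, SimpleGraph.Subgraph.connected_iff_forall_exists_walk_subgraph]
  constructor
  · rintro ⟨hne, h⟩
    refine ⟨?_, fun x hx y hy => ?_⟩
    · obtain ⟨x, hx⟩ := hne; exact ⟨x, by simpa using hx⟩
    · obtain ⟨p, hp⟩ := h (by simpa using hx) (by simpa using hy)
      refine ⟨p, fun z hz => ?_⟩
      have := hp.1
      simpa using this (by simpa [SimpleGraph.Walk.verts_toSubgraph] using hz)
  · rintro ⟨⟨x, hx⟩, h⟩
    refine ⟨⟨x, by simpa using hx⟩, fun {u} {v} hu hv => ?_⟩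
    obtain ⟨p, hp⟩ := h u (by simpa using hu) v (by simpa using hv)
    refine ⟨p, ?_, ?_⟩
    · intro z hz
      simp only [SimpleGraph.Walk.verts_toSubgraph, Set.mem_setOf_eq] at hz
      simpa using hp z hz
    · intro a b hab
      have ha := hab.fst_mem
      have hb := hab.snd_mem
      simp only [SimpleGraph.Walk.verts_toSubgraph, Set.mem_setOf_eq] at ha hb
      exact ⟨by simpa using hp a ha, by simpa using hp b hb, hab.adj_sub⟩

/-- In a connected acyclic graph, any path's support lies in any connected finset containing
its endpoints. -/
lemma path_support_subset (hacyc : G.IsAcyclic) {s : Finset V}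
    (hs : (G.induce (↑s : Set V)).Connected) {x y : V} (hx : x ∈ s) (hy : y ∈ s)
    (p : G.Walk x y) (hp : p.IsPath) : ∀ z ∈ p.support, z ∈ s := by
  obtain ⟨-, h⟩ := (conn_iff_walks s).1 hs
  obtain ⟨q, hq⟩ := h x hx y hy
  have : (⟨p, hp⟩ : G.Path x y) = ⟨q.bypass, q.bypass_isPath⟩ := hacyc.path_unique _ _
  have hpq : p = q.bypass := congrArg Subtype.val this
  intro z hz
  rw [hpq] at hz
  exact hq z (q.support_bypass_subset hz)

/-- In a connected acyclic graph, every path realizes the distance. -/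
lemma path_length_eq_dist (hconn : G.Connected) (hacyc : G.IsAcyclic) {x y : V}
    (p : G.Walk x y) (hp : p.IsPath) : p.length = G.dist x y := by
  obtain ⟨w, hw⟩ := hconn.exists_walk_length_eq_dist x y
  have : (⟨p, hp⟩ : G.Path x y) = ⟨w.bypass, w.bypass_isPath⟩ := hacyc.path_unique _ _
  have hpw : p = w.bypass := congrArg Subtype.val this
  have h1 : G.dist x y ≤ p.length := SimpleGraph.dist_le p
  have h2 : p.length ≤ G.dist x y := by
    rw [hpw, ← hw]; exact SimpleGraph.Walk.length_bypass_le w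
  omega

/-- Distance additivity along a path. -/
lemma dist_add_of_mem_path (hconn : G.Connected) (hacyc : G.IsAcyclic) {x y z : V}
    (p : G.Walk x y) (hp : p.IsPath) (hz : z ∈ p.support) :
    G.dist x z + G.dist z y = G.dist x y := by
  have hsplit := p.take_spec hz
  have hlen : (p.takeUntil z hz).length + (p.dropUntil z hz).length = p.length := by
    rw [← SimpleGraph.Walk.length_append, hsplit]
  rw [← path_length_eq_dist hconn hacyc p hp,
    ← path_length_eq_dist hconn hacyc _ (hp.takeUntil hz),
    ← path_length_eq_dist hconn hacyc _ (hp.dropUntil hz)]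
  exact hlen

/-- A walk from inside a finset to outside it crosses the boundary at some support vertex. -/
lemma exists_exit {s : Finset V} {a c : V} (p : G.Walk a c) (ha : a ∈ s) (hc : c ∉ s) :
    ∃ w v, w ∈ s ∧ v ∉ s ∧ G.Adj w v ∧ v ∈ p.support := by
  induction p with
  | nil => exact absurd ha hc
  | cons hadj q ih =>
    rename_i x y z
    by_cases hy : y ∈ s
    · obtain ⟨w, v, h1, h2, h3, h4⟩ := ih hy hc
      exact ⟨w, v, h1, h2, h3, by simp [h4]⟩
    · exact ⟨x, y, ha, hy, hadj, by simp⟩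

lemma insert_conn {s : Finset V} (hs : (G.induce (↑s : Set V)).Connected) {w v : V} (hw : w ∈ s)
    (hadj : G.Adj w v) : (G.induce (↑(insert v s) : Set V)).Connected := by
  rw [conn_iff_walks] at hs ⊢
  obtain ⟨hne, h⟩ := hs
  refine ⟨⟨v, mem_insert_self _ _⟩, fun x hx y hy => ?_⟩
  have key : ∀ x ∈ s, ∃ p : G.Walk x v, ∀ z ∈ p.support, z ∈ insert v s := by
    intro x hx
    obtain ⟨p, hp⟩ := h x hx w hw
    refine ⟨p.append (SimpleGraph.Walk.cons hadj SimpleGraph.Walk.nil), fun z hz => ?_⟩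
    rw [SimpleGraph.Walk.mem_support_append_iff] at hz
    rcases hz with hz | hz
    · exact mem_insert_of_mem (hp z hz)
    · simp only [SimpleGraph.Walk.support_cons, SimpleGraph.Walk.support_nil,
        List.mem_cons, List.mem_singleton, List.not_mem_nil, or_false] at hz
      rcases hz with rfl | rfl
      · exact mem_insert_of_mem hw
      · exact mem_insert_self _ _
  rcases mem_insert.1 hx with rfl | hx' <;> rcases mem_insert.1 hy with rfl | hy'
  · exact ⟨SimpleGraph.Walk.nil, by simp [hx]⟩
  · obtain ⟨p, hp⟩ := key y hy'
    exact ⟨p.reverse, fun z hz => hp z (by simpa using hz)⟩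
  · exact key x hx'
  · obtain ⟨p, hp⟩ := h x hx' y hy'
    exact ⟨p, fun z hz => mem_insert_of_mem (hp z hz)⟩

/-- If every element has a walk to a common vertex `v` inside `t`, then `t` is connected. -/
lemma conn_of_walks_to {t : Finset V} {v : V} (hv : v ∈ t)
    (H : ∀ x ∈ t, ∃ p : G.Walk x v, ∀ z ∈ p.support, z ∈ t) :
    (G.induce (↑t : Set V)).Connected := by
  rw [conn_iff_walks]
  refine ⟨⟨v, hv⟩, fun x hx y hy => ?_⟩
  obtain ⟨p, hp⟩ := H x hx
  obtain ⟨q, hq⟩ := H y hy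
  refine ⟨p.append q.reverse, fun z hz => ?_⟩
  rw [SimpleGraph.Walk.mem_support_append_iff] at hz
  rcases hz with hz | hz
  · exact hp z hz
  · exact hq z (by simpa using hz)

/-- Removing a farthest vertex from a connected finset keeps it connected. -/
lemma erase_conn_max (hconn : G.Connected) (hacyc : G.IsAcyclic) {S : Finset V}
    (hS : (G.induce (↑S : Set V)).Connected) {v u : V}
    (hv : v ∈ S) (hu : u ∈ S) (hmax : ∀ x ∈ S, G.dist v x ≤ G.dist v u) (hne : u ≠ v) :
    (G.induce (↑(S.erase u) : Set V)).Connected := by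
  refine conn_of_walks_to (mem_erase.2 ⟨hne.symm, hv⟩) ?_
  intro x hx
  obtain ⟨hxu, hxS⟩ := mem_erase.1 hx
  obtain ⟨-, h⟩ := (conn_iff_walks S).1 hS
  obtain ⟨q, hq⟩ := h x hxS v hv
  refine ⟨q.bypass, fun z hz => ?_⟩
  have hzS : z ∈ S := hq z (q.support_bypass_subset hz)
  refine mem_erase.2 ⟨fun hzu => ?_, hzS⟩
  rw [hzu] at hz
  -- u lies on the path x → v
  have hadd := dist_add_of_mem_path hconn hacyc q.bypass q.bypass_isPath hz
  have h1 : G.dist x v ≤ G.dist u v := by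
    have := hmax x hxS
    rwa [SimpleGraph.dist_comm (u := v) (v := x), SimpleGraph.dist_comm (u := v) (v := u)] at this
  have h2 : G.dist x u ≠ 0 := by
    intro h0
    exact hxu ((hconn.dist_eq_zero_iff).1 h0)
  omega

/-- Phase-2 leaf removal: remove a vertex of `U1 \ U2` farthest from `v ∈ U2`. -/
lemma erase_conn_max2 (hconn : G.Connected) (hacyc : G.IsAcyclic) {U1 U2 : Finset V}
    (h2 : (G.induce (↑U2 : Set V)).Connected) {v u : V}
    (hS : (G.induce (↑(insert v U1) : Set V)).Connected)
    (hv2 : v ∈ U2) (hu : u ∈ U1) (hu2 : u ∉ U2)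
    (hmax : ∀ x ∈ U1 \ U2, G.dist v x ≤ G.dist v u) :
    (G.induce (↑((insert v U1).erase u) : Set V)).Connected := by
  have hune : u ≠ v := fun h => hu2 (h ▸ hv2)
  refine conn_of_walks_to (mem_erase.2 ⟨hune.symm, mem_insert_self _ _⟩) ?_
  intro x hx
  obtain ⟨hxu, hxS⟩ := mem_erase.1 hx
  obtain ⟨-, h⟩ := (conn_iff_walks (insert v U1)).1 hS
  obtain ⟨q, hq⟩ := h x hxS v (mem_insert_self _ _)
  set p := q.bypass with hpdef
  have hpP : p.IsPath := q.bypass_isPath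
  have hpsub : ∀ z ∈ p.support, z ∈ insert v U1 := fun z hz =>
    hq z (q.support_bypass_subset hz)
  refine ⟨p, fun z hz => ?_⟩
  refine mem_erase.2 ⟨fun hzu => ?_, hpsub z hz⟩
  rw [hzu] at hz
  -- suppose u is on the path p : x → v; derive a contradiction
  set q' := p.reverse with hq'def
  have hq'P : q'.IsPath := hpP.reverse
  have hq'sub : ∀ z ∈ q'.support, z ∈ insert v U1 := by
    intro z hzz
    exact hpsub z (by simpa [hq'def, SimpleGraph.Walk.support_reverse] using hzz)
  have huq' : u ∈ q'.support := by
    simpa [hq'def, SimpleGraph.Walk.support_reverse] using hz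
  -- split at u
  have d1 : G.dist v u + G.dist u x = G.dist v x :=
    dist_add_of_mem_path hconn hacyc q' hq'P huq'
  set r := q'.dropUntil u huq' with hrdef
  have hrP : r.IsPath := hq'P.dropUntil huq'
  have hrsub : ∀ z ∈ r.support, z ∈ q'.support := fun z hzz =>
    q'.support_dropUntil_subset huq' hzz
  -- r is a nonempty walk u → x
  cases hr : r with
  | nil => exact hxu rfl
  | cons hadj r2 =>
    rename_i y
    have hr2P : r2.IsPath := by
      have := hrP; rw [hr] at this; exact this.of_cons
    have hyr : y ∈ r.support := by rw [hr]; simp [SimpleGraph.Walk.support_cons]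
    have hyq' : y ∈ q'.support := hrsub y hyr
    have d2 : G.dist v y + G.dist y x = G.dist v x :=
      dist_add_of_mem_path hconn hacyc q' hq'P hyq'
    have d3 : G.dist u x = G.dist y x + 1 := by
      have hl1 : r.length = G.dist u x := path_length_eq_dist hconn hacyc r hrP
      have hl2 : r2.length = G.dist y x := path_length_eq_dist hconn hacyc r2 hr2P
      rw [hr] at hl1
      simp only [SimpleGraph.Walk.length_cons] at hl1
      omega
    have d4 : G.dist v y = G.dist v u + 1 := by omega
    by_cases hy2 : y ∈ U2
    · -- then u would be in U2 via convexity of U2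
      set t := q'.takeUntil y hyq' with htdef
      have htP : t.IsPath := hq'P.takeUntil hyq'
      have htsub : ∀ z ∈ t.support, z ∈ U2 :=
        path_support_subset hacyc h2 hv2 hy2 t htP
      have hut : u ∈ t.support := by
        by_contra hut
        have hspec := q'.take_spec hyq'
        have : u ∈ (q'.takeUntil y hyq').support ∨ u ∈ (q'.dropUntil y hyq').support := by
          rw [← SimpleGraph.Walk.mem_support_append_iff, hspec]; exact huq'
        rcases this with h' | h'
        · exact hut h'
        · have hdP : (q'.dropUntil y hyq').IsPath := hq'P.dropUntil hyq'
          have d5 : G.dist y u + G.dist u x = G.dist y x :=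
            dist_add_of_mem_path hconn hacyc _ hdP h'
          omega
      exact hu2 (htsub u hut)
    · -- y ∈ U1 \ U2 is farther from v than u, contradiction
      have hyv : y ≠ v := by
        intro h'; rw [h'] at d4; rw [G.dist_self] at d4; omega
      have hyU1 : y ∈ U1 := by
        have := hq'sub y hyq'
        rcases mem_insert.1 this with h' | h'
        · exact absurd h' hyv
        · exact h'
      have := hmax y (mem_sdiff.2 ⟨hyU1, hy2⟩)
      omega

/-- Distance from a vertex to a nonempty finset. -/
noncomputable def dS (G : SimpleGraph V) (U2 : Finset V) (h2ne : U2.Nonempty) (x : V) : ℕ :=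
  U2.inf' h2ne fun b => G.dist x b

lemma dS_eq_zero_of_mem {U2 : Finset V} (h2ne : U2.Nonempty) {x : V} (hx : x ∈ U2) :
    dS G U2 h2ne x = 0 := by
  have h := Finset.inf'_le (fun b => G.dist x b) hx
  rw [SimpleGraph.dist_self] at h
  exact Nat.le_zero.1 h

lemma mem_of_dS_eq_zero (hconn : G.Connected) {U2 : Finset V} (h2ne : U2.Nonempty) {x : V}
    (hx : dS G U2 h2ne x = 0) : x ∈ U2 := by
  obtain ⟨b, hb, hEq⟩ := Finset.exists_mem_eq_inf' h2ne (fun b => G.dist x b)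
  rw [dS] at hx
  rw [hEq] at hx
  rwa [(hconn.dist_eq_zero_iff).1 hx]

/-- The exchange step: given two distinct connected finsets of the same size, we can swap one
vertex of `U1` for a new vertex, staying connected and strictly decreasing total distance
to `U2`. -/
lemma exchange (hconn : G.Connected) (hacyc : G.IsAcyclic) {U1 U2 : Finset V}
    (h1 : (G.induce (↑U1 : Set V)).Connected) (h2 : (G.induce (↑U2 : Set V)).Connected)
    (hc : U1.card = U2.card) (hne : U1 ≠ U2) (h2ne : U2.Nonempty) :
    ∃ u v, u ∈ U1 ∧ v ∉ U1 ∧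
      (G.induce (↑((insert v U1).erase u) : Set V)).Connected ∧
      dS G U2 h2ne v < dS G U2 h2ne u := by
  by_cases hdisj : ∀ x ∈ U1, x ∉ U2
  · -- Phase 1: U1 and U2 are disjoint
    have h1ne : U1.Nonempty := ((conn_iff_walks U1).1 h1).1
    obtain ⟨a, haU1, hamin⟩ := Finset.exists_min_image U1 (dS G U2 h2ne) h1ne
    obtain ⟨b0, hb0, hDa⟩ := Finset.exists_mem_eq_inf' h2ne (fun b => G.dist a b)
    have hab : a ≠ b0 := fun h => hdisj a haU1 (h ▸ hb0)
    have hd1 : 1 ≤ G.dist a b0 := hconn.pos_dist_of_ne hab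
    obtain ⟨w, hw⟩ := hconn.exists_walk_length_eq_dist a b0
    cases hwc : w with
    | nil => rw [hwc] at hw; simp at hw; simp at hd1
    | cons hadj w2 =>
      rename_i v'
      have hlen2 : w2.length + 1 = G.dist a b0 := by
        rw [hwc] at hw; simpa [SimpleGraph.Walk.length_cons] using hw
      have hDv' : dS G U2 h2ne v' < dS G U2 h2ne a := by
        have hle : dS G U2 h2ne v' ≤ G.dist v' b0 :=
          Finset.inf'_le (fun b => G.dist v' b) hb0
        have hle2 : G.dist v' b0 ≤ w2.length := SimpleGraph.dist_le w2
        have : dS G U2 h2ne a = G.dist a b0 := hDa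
        omega
      have hvU1 : v' ∉ U1 := fun hmem => absurd (hamin v' hmem) (by omega)
      have hSconn := insert_conn h1 haU1 hadj
      obtain ⟨u, huS, humax⟩ :=
        Finset.exists_max_image (insert v' U1) (G.dist v') ⟨v', mem_insert_self _ _⟩
      have huv' : u ≠ v' := by
        intro h'
        have h1' : 0 < G.dist v' a := hconn.pos_dist_of_ne (fun h => hvU1 (h ▸ haU1))
        have := humax a (mem_insert_of_mem haU1)
        rw [h'] at this
        rw [G.dist_self] at this
        omega
      have huU1 : u ∈ U1 := by
        rcases mem_insert.1 huS with h' | h'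
        · exact absurd h' huv'
        · exact h'
      refine ⟨u, v', huU1, hvU1, erase_conn_max hconn hacyc hSconn
        (mem_insert_self _ _) huS humax huv', ?_⟩
      have := hamin u huU1
      omega
  · -- Phase 2: they intersect
    push_neg at hdisj
    obtain ⟨a, haU1, haU2⟩ := hdisj
    have hnsub : ¬ U2 ⊆ U1 := by
      intro hsub
      exact hne (Finset.eq_of_subset_of_card_le hsub (le_of_eq hc)).symm
    obtain ⟨c, hcU2, hcU1⟩ := Finset.not_subset.1 hnsub
    obtain ⟨-, h2w⟩ := (conn_iff_walks U2).1 h2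
    obtain ⟨q, hq⟩ := h2w a haU2 c hcU2
    obtain ⟨w, v, hwU1, hvU1, hadj, hvsup⟩ := exists_exit q haU1 hcU1
    have hvU2 : v ∈ U2 := hq v hvsup
    have hSconn := insert_conn h1 hwU1 hadj
    have hAne : (U1 \ U2).Nonempty := by
      rw [← Finset.card_pos, Finset.card_sdiff_comm hc, Finset.card_pos]
      exact ⟨c, mem_sdiff.2 ⟨hcU2, hcU1⟩⟩
    obtain ⟨u, huA, humax⟩ := Finset.exists_max_image (U1 \ U2) (G.dist v) hAne
    obtain ⟨huU1, huU2⟩ := mem_sdiff.1 huA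
    refine ⟨u, v, huU1, hvU1,
      erase_conn_max2 hconn hacyc h2 hSconn hvU2 huU1 huU2 humax, ?_⟩
    have hv0 : dS G U2 h2ne v = 0 := dS_eq_zero_of_mem h2ne hvU2
    have hu1 : dS G U2 h2ne u ≠ 0 := fun h0 => huU2 (mem_of_dS_eq_zero hconn h2ne h0)
    omega


lemma swap_card {U1 : Finset V} {u v : V} (hu : u ∈ U1) (hv : v ∉ U1) :
    ((insert v U1).erase u).card = U1.card := by
  rw [Finset.card_erase_of_mem (mem_insert_of_mem hu), Finset.card_insert_of_notMem hv]
  omega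

lemma filter_card_le_succ_of_subset_insert {s t : Finset V} {w : V} (col : V → Bool)
    (h : s ⊆ insert w t) :
    (s.filter fun x => col x).card ≤ (t.filter fun x => col x).card + 1 := by
  calc (s.filter fun x => col x).card
      ≤ ((insert w t).filter fun x => col x).card :=
        Finset.card_le_card (Finset.filter_subset_filter _ h)
    _ ≤ (t.filter fun x => col x).card + 1 := by
        rw [Finset.filter_insert]
        split_ifs
        · exact Finset.card_insert_le _ _
        · omega

lemma swap_filter_bounds {U1 : Finset V} {u v : V} (hu : u ∈ U1) (hv : v ∉ U1)
    (col : V → Bool) :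
    (((insert v U1).erase u).filter fun x => col x).card ≤
        (U1.filter fun x => col x).card + 1 ∧
      (U1.filter fun x => col x).card ≤
        (((insert v U1).erase u).filter fun x => col x).card + 1 := by
  constructor
  · exact filter_card_le_succ_of_subset_insert col
      (fun x hx => Finset.mem_of_mem_erase hx)
  · refine filter_card_le_succ_of_subset_insert (w := u) col (fun x hx => ?_)
    by_cases hxu : x = u
    · exact hxu ▸ Finset.mem_insert_self _ _
    · exact Finset.mem_insert_of_mem (Finset.mem_erase.2 ⟨hxu, Finset.mem_insert_of_mem hx⟩)

lemma swap_phi {U2 : Finset V} (h2ne : U2.Nonempty) {U1 : Finset V} {u v : V}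
    (hu : u ∈ U1) (hv : v ∉ U1) (hD : dS G U2 h2ne v < dS G U2 h2ne u) :
    (∑ x ∈ (insert v U1).erase u, dS G U2 h2ne x) < ∑ x ∈ U1, dS G U2 h2ne x := by
  have h1 : (∑ x ∈ (insert v U1).erase u, dS G U2 h2ne x) + dS G U2 h2ne u
      = ∑ x ∈ insert v U1, dS G U2 h2ne x :=
    Finset.sum_erase_add _ _ (mem_insert_of_mem hu)
  have h2 : (∑ x ∈ insert v U1, dS G U2 h2ne x)
      = dS G U2 h2ne v + ∑ x ∈ U1, dS G U2 h2ne x := Finset.sum_insert hv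
  omega

lemma ivt (hconn : G.Connected) (hacyc : G.IsAcyclic) {U2 : Finset V}
    (h2 : (G.induce (↑U2 : Set V)).Connected) (h2ne : U2.Nonempty) (col : V → Bool) (j : ℕ)
    (hj2 : j ≤ (U2.filter fun x => col x).card) :
    ∀ n : ℕ, ∀ U1 : Finset V, (∑ x ∈ U1, dS G U2 h2ne x) ≤ n →
      (G.induce (↑U1 : Set V)).Connected → U1.card = U2.card →
      (U1.filter fun x => col x).card ≤ j →
      ∃ U : Finset V, (G.induce (↑U : Set V)).Connected ∧ U.card = U2.card ∧
        (U.filter fun x => col x).card = j := by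
  intro n
  induction n with
  | zero =>
    intro U1 hphi h1 hc hbj
    have hUsub : U1 ⊆ U2 := by
      intro x hx
      refine mem_of_dS_eq_zero hconn h2ne ?_
      have := Finset.sum_eq_zero_iff.1 (Nat.le_zero.1 hphi) x hx
      exact this
    have : U1 = U2 := Finset.eq_of_subset_of_card_le hUsub (le_of_eq hc.symm)
    subst this
    exact ⟨U1, h1, hc, le_antisymm hbj hj2⟩
  | succ n ih =>
    intro U1 hphi h1 hc hbj
    by_cases hbj' : (U1.filter fun x => col x).card = j
    · exact ⟨U1, h1, hc, hbj'⟩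
    have hlt : (U1.filter fun x => col x).card < j := lt_of_le_of_ne hbj hbj'
    have hne : U1 ≠ U2 := by
      intro h'; subst h'; omega
    obtain ⟨u, v, hu, hv, hconn', hD⟩ := exchange hconn hacyc h1 h2 hc hne h2ne
    have hphi' := swap_phi h2ne hu hv hD
    obtain ⟨hb1, hb2⟩ := swap_filter_bounds hu hv col
    exact ih _ (by omega) hconn' (by rw [swap_card hu hv, hc]) (by omega)

theorem appears_set_eq_Icc' {V : Type*} [Fintype V] [DecidableEq V]
    (G : SimpleGraph V) (hconn : G.Connected) (hacyc : G.IsAcyclic)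
    (col : V → Bool) (i : ℕ) (hi1 : 1 ≤ i) (hin : i ≤ Fintype.card V)
    (hex : ∃ U : Finset V, U.card = i ∧ (G.induce (↑U : Set V)).Connected)
    (J : Set ℕ)
    (hJ : J = {j : ℕ | ∃ U : Finset V, U.card = i ∧
      (G.induce (↑U : Set V)).Connected ∧ (U.filter fun v => col v).card = j}) :
    J = Set.Icc (sInf J) (sSup J) := by
  obtain ⟨U0, hU0c, hU0conn⟩ := hex
  have hJne : J.Nonempty := ⟨(U0.filter fun v => col v).card, by
    rw [hJ]; exact ⟨U0, hU0c, hU0conn, rfl⟩⟩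
  have hbdd : BddAbove J := by
    refine ⟨i, fun j hj => ?_⟩
    rw [hJ] at hj
    obtain ⟨U, hUc, -, hUb⟩ := hj
    rw [← hUb, ← hUc]
    exact Finset.card_filter_le _ _
  obtain ⟨Umin, hminc, hminconn, hminb⟩ : sInf J ∈ {j : ℕ | ∃ U : Finset V, U.card = i ∧
      (G.induce (↑U : Set V)).Connected ∧ (U.filter fun v => col v).card = j} := by
    rw [← hJ]; exact Nat.sInf_mem hJne
  obtain ⟨Umax, hmaxc, hmaxconn, hmaxb⟩ : sSup J ∈ {j : ℕ | ∃ U : Finset V, U.card = i ∧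
      (G.induce (↑U : Set V)).Connected ∧ (U.filter fun v => col v).card = j} := by
    rw [← hJ]; exact Nat.sSup_mem hJne hbdd
  ext j
  constructor
  · intro hj
    exact ⟨Nat.sInf_le hj, le_csSup hbdd hj⟩
  · rintro ⟨hj1, hj2⟩
    have hmaxne : Umax.Nonempty := by
      rw [← Finset.card_pos, hmaxc]; omega
    obtain ⟨U, hUconn, hUc, hUb⟩ := ivt hconn hacyc hmaxconn hmaxne col j
      (by rw [hmaxb]; exact hj2) (∑ x ∈ Umin, dS G Umax hmaxne x) Umin le_rfl
      hminconn (by rw [hminc, hmaxc]) (by rw [hminb]; exact hj1)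
    rw [hJ]
    exact ⟨U, by rw [hUc, hmaxc], hUconn, hUb⟩

end AppearsIcc


/-- Correctness of the min/max index: for a black/white colored tree and a
size `i` admitting at least one connected subgraph on `i` vertices, the set
of black-counts `j` such that `(i, j)` appears is exactly the integer
interval from the minimum to the maximum black-count over connected
subgraphs with `i` vertices. -/
theorem appears_set_eq_Icc {V : Type*} [Fintype V] [DecidableEq V]
    (G : SimpleGraph V) (hconn : G.Connected) (hacyc : G.IsAcyclic)
    (col : V → Bool) (i : ℕ) (hi1 : 1 ≤ i) (hin : i ≤ Fintype.card V)
    (hex : ∃ U : Finset V, U.card = i ∧ (G.induce (↑U : Set V)).Connected)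
    (J : Set ℕ)
    (hJ : J = {j : ℕ | ∃ U : Finset V, U.card = i ∧
      (G.induce (↑U : Set V)).Connected ∧ (U.filter fun v => col v).card = j}) :
    J = Set.Icc (sInf J) (sSup J) :=
  AppearsIcc.appears_set_eq_Icc' G hconn hacyc col i hi1 hin hex J hJ
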